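/- Let d ≥ 1, let E ⊆ ℝ^d be a finite set with at least two points, and let P_E be a 1-field on E. If F : ℝ^d → ℝ is differentiable, its gradient ∇F is Lipschitz with constant M, and F(x) = f(x), ∇F(x) = g(x) for all x ∈ E, then Γ(P_E) ≤ M; in particular, for every pair of distinct x, y ∈ E, √(A(x,y)² + B(x,y)²) + A(x,y) ≤ M. -/

import Mathlib

open scoped RealInnerProductSpace


/-- The affine polynomial (first order jet) `P_u(z) = f(u) + ⟪g(u), z - u⟫`. -/
noncomputable def jet {d : ℕ} (f : EuclideanSpace ℝ (Fin d) → ℝ)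
    (g : EuclideanSpace ℝ (Fin d) → EuclideanSpace ℝ (Fin d))
    (u z : EuclideanSpace ℝ (Fin d)) : ℝ :=
  f u + ⟪g u, z - u⟫

/-- `A(x,y) = |P_x(x) - P_y(x) + P_x(y) - P_y(y)| / |x - y|²`. -/
noncomputable def funA {d : ℕ} (f : EuclideanSpace ℝ (Fin d) → ℝ)
    (g : EuclideanSpace ℝ (Fin d) → EuclideanSpace ℝ (Fin d))
    (x y : EuclideanSpace ℝ (Fin d)) : ℝ :=
  |jet f g x x - jet f g y x + jet f g x y - jet f g y y| / ‖x - y‖ ^ 2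

/-- `B(x,y) = ‖g(x) - g(y)‖ / |x - y|`. -/
noncomputable def funB {d : ℕ}
    (g : EuclideanSpace ℝ (Fin d) → EuclideanSpace ℝ (Fin d))
    (x y : EuclideanSpace ℝ (Fin d)) : ℝ :=
  ‖g x - g y‖ / ‖x - y‖

/-- `Ã(x,y) = |P_x(x) - P_y(x)| / |x - y|²`. -/
noncomputable def funAtilde {d : ℕ} (f : EuclideanSpace ℝ (Fin d) → ℝ)
    (g : EuclideanSpace ℝ (Fin d) → EuclideanSpace ℝ (Fin d))
    (x y : EuclideanSpace ℝ (Fin d)) : ℝ :=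
  |jet f g x x - jet f g y x| / ‖x - y‖ ^ 2

/-- `Γ(P_E)`: max over distinct pairs of `√(A² + B²) + A`. -/
noncomputable def Gamma {d : ℕ} (E : Set (EuclideanSpace ℝ (Fin d)))
    (f : EuclideanSpace ℝ (Fin d) → ℝ)
    (g : EuclideanSpace ℝ (Fin d) → EuclideanSpace ℝ (Fin d)) : ℝ :=
  sSup {t : ℝ | ∃ x ∈ E, ∃ y ∈ E, x ≠ y ∧
    t = Real.sqrt (funA f g x y ^ 2 + funB g x y ^ 2) + funA f g x y}

/-- `Γ'(P_E)`: max over distinct pairs of `max {A, B}`. -/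
noncomputable def GammaPrime {d : ℕ} (E : Set (EuclideanSpace ℝ (Fin d)))
    (f : EuclideanSpace ℝ (Fin d) → ℝ)
    (g : EuclideanSpace ℝ (Fin d) → EuclideanSpace ℝ (Fin d)) : ℝ :=
  sSup {t : ℝ | ∃ x ∈ E, ∃ y ∈ E, x ≠ y ∧ t = max (funA f g x y) (funB g x y)}

/-- `Γ̃(P_E)`: max over distinct pairs of `max {Ã, B}`. -/
noncomputable def GammaTilde {d : ℕ} (E : Set (EuclideanSpace ℝ (Fin d)))
    (f : EuclideanSpace ℝ (Fin d) → ℝ)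
    (g : EuclideanSpace ℝ (Fin d) → EuclideanSpace ℝ (Fin d)) : ℝ :=
  sSup {t : ℝ | ∃ x ∈ E, ∃ y ∈ E, x ≠ y ∧ t = max (funAtilde f g x y) (funB g x y)}

set_option maxHeartbeats 1000000 in
lemma taylor_bound {d : ℕ} {F : EuclideanSpace ℝ (Fin d) → ℝ} {M : ℝ} (hM : 0 ≤ M)
    (hF : Differentiable ℝ F) (hLip : LipschitzWith M.toNNReal (gradient F))
    (a b : EuclideanSpace ℝ (Fin d)) :
    |F b - F a - ⟪gradient F a, b - a⟫| ≤ M / 2 * ‖b - a‖ ^ 2 := by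
  set γ : ℝ → EuclideanSpace ℝ (Fin d) := fun t => a + t • (b - a) with hγdef
  have hγ : ∀ t : ℝ, HasDerivAt γ (b - a) t := by
    intro t
    simpa [hγdef] using ((hasDerivAt_id t).smul_const (b - a)).const_add a
  set φ' : ℝ → ℝ := fun t => ⟪gradient F (γ t), b - a⟫ with hφ'def
  have hφ : ∀ t : ℝ, HasDerivAt (fun s => F (γ s)) (φ' t) t := by
    intro t
    have h1 := (hF (γ t)).hasGradientAt.hasFDerivAt.comp_hasDerivAt t (hγ t)
    simp only [InnerProductSpace.toDual_apply_apply] at h1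
    exact h1
  have hgc : Continuous (gradient F) := hLip.continuous
  have hcont : Continuous φ' := by
    exact (hgc.comp (by continuity)).inner continuous_const
  have hint : (∫ t in (0:ℝ)..1, φ' t) = F (γ 1) - F (γ 0) :=
    intervalIntegral.integral_eq_sub_of_hasDerivAt (fun t _ => hφ t)
      (hcont.intervalIntegrable 0 1)
  have hγ0 : γ 0 = a := by simp [hγdef]
  have hγ1 : γ 1 = b := by simp [hγdef]
  have hsub : F b - F a - ⟪gradient F a, b - a⟫
      = ∫ t in (0:ℝ)..1, (φ' t - ⟪gradient F a, b - a⟫) := by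
    rw [intervalIntegral.integral_sub (hcont.intervalIntegrable 0 1)
      intervalIntegrable_const, hint, hγ0, hγ1]
    simp
  have hb : ∀ t ∈ Set.Icc (0:ℝ) 1,
      |φ' t - ⟪gradient F a, b - a⟫| ≤ M * ‖b - a‖ ^ 2 * t := by
    intro t ht
    have h1 : φ' t - ⟪gradient F a, b - a⟫ = ⟪gradient F (γ t) - gradient F a, b - a⟫ := by
      rw [inner_sub_left]
    rw [h1]
    have h2 : |⟪gradient F (γ t) - gradient F a, b - a⟫| ≤
        ‖gradient F (γ t) - gradient F a‖ * ‖b - a‖ := abs_real_inner_le_norm _ _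
    have h3 : ‖gradient F (γ t) - gradient F a‖ ≤ M * ‖γ t - a‖ := by
      have := hLip.dist_le_mul (γ t) a
      rw [dist_eq_norm, dist_eq_norm] at this
      simpa [Real.coe_toNNReal M hM] using this
    have h4 : ‖γ t - a‖ = t * ‖b - a‖ := by
      simp [hγdef, norm_smul, abs_of_nonneg ht.1]
    calc |⟪gradient F (γ t) - gradient F a, b - a⟫|
        ≤ ‖gradient F (γ t) - gradient F a‖ * ‖b - a‖ := h2
      _ ≤ (M * ‖γ t - a‖) * ‖b - a‖ := by
          apply mul_le_mul_of_nonneg_right h3 (norm_nonneg _)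
      _ = M * ‖b - a‖ ^ 2 * t := by rw [h4]; ring
  rw [hsub]
  calc |∫ t in (0:ℝ)..1, (φ' t - ⟪gradient F a, b - a⟫)|
      ≤ ∫ t in (0:ℝ)..1, |φ' t - ⟪gradient F a, b - a⟫| :=
        intervalIntegral.abs_integral_le_integral_abs zero_le_one
    _ ≤ ∫ t in (0:ℝ)..1, M * ‖b - a‖ ^ 2 * t := by
        apply intervalIntegral.integral_mono_on zero_le_one
        · exact ((hcont.sub continuous_const).abs).intervalIntegrable 0 1
        · exact ((continuous_const.mul continuous_id).intervalIntegrable 0 1)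
        · exact hb
    _ = M / 2 * ‖b - a‖ ^ 2 := by
        rw [intervalIntegral.integral_const_mul, integral_id]; ring

set_option maxHeartbeats 1000000 in
lemma key_ineq {d : ℕ} {F : EuclideanSpace ℝ (Fin d) → ℝ} {M : ℝ} (hM : 0 < M)
    (hF : Differentiable ℝ F) (hLip : LipschitzWith M.toNNReal (gradient F))
    (x y : EuclideanSpace ℝ (Fin d)) :
    ‖gradient F x - gradient F y‖ ^ 2 ≤ M ^ 2 * ‖x - y‖ ^ 2
      + 2 * M * (2 * (F x - F y) + ⟪gradient F x + gradient F y, y - x⟫) := by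
  set gx := gradient F x with hgx
  set gy := gradient F y with hgy
  set t : ℝ := M⁻¹ with htd
  have ht : M * t = 1 := mul_inv_cancel₀ hM.ne'
  set w : EuclideanSpace ℝ (Fin d) := ((1:ℝ)/2) • (x + y) - (t/2) • (gx - gy) with hwd
  have hwx : w - x = (-(1/2) : ℝ) • (x - y) - (t/2) • (gx - gy) := by
    rw [hwd]; module
  have hwy : w - y = ((1/2) : ℝ) • (x - y) - (t/2) • (gx - gy) := by
    rw [hwd]; module
  set u := x - y with hud
  set δ := gx - gy with hδd
  set a1 : ℝ := ⟪gx, u⟫ with ha1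
  set a2 : ℝ := ⟪gy, u⟫ with ha2
  set b1 : ℝ := ⟪gx, δ⟫ with hb1
  set b2 : ℝ := ⟪gy, δ⟫ with hb2
  set p : ℝ := ⟪u, δ⟫ with hp
  have hnd : ‖δ‖ ^ 2 = b1 - b2 := by
    rw [← real_inner_self_eq_norm_sq, hδd, inner_sub_left]
  have hnu : ⟪u, u⟫ = ‖u‖ ^ 2 := real_inner_self_eq_norm_sq u
  have eIx : ⟪gx, w - x⟫ = -(1/2) * a1 - (t/2) * b1 := by
    rw [hwx, inner_sub_right, inner_smul_right, inner_smul_right]; try ring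
  have eIy : ⟪gy, w - y⟫ = (1/2) * a2 - (t/2) * b2 := by
    rw [hwy, inner_sub_right, inner_smul_right, inner_smul_right]; try ring
  have hδδ : ⟪δ, δ⟫ = b1 - b2 := by rw [hb1, hb2, hδd, inner_sub_left]
  have hcm : ⟪δ, u⟫ = p := by rw [hp]; exact real_inner_comm u δ
  have eNx : ‖w - x‖ ^ 2 = (1/4) * ‖u‖^2 + (t/2) * p + (t/2)^2 * (b1 - b2) := by
    rw [← real_inner_self_eq_norm_sq, hwx]
    simp only [inner_sub_left, inner_sub_right, real_inner_smul_left, real_inner_smul_right]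
    rw [hnu, hδδ, hcm, ← hp]
    ring
  have eNy : ‖w - y‖ ^ 2 = (1/4) * ‖u‖^2 - (t/2) * p + (t/2)^2 * (b1 - b2) := by
    rw [← real_inner_self_eq_norm_sq, hwy]
    simp only [inner_sub_left, inner_sub_right, real_inner_smul_left, real_inner_smul_right]
    rw [hnu, hδδ, hcm, ← hp]
    ring
  have h1 := (abs_le.1 (taylor_bound hM.le hF hLip x w)).2
  have h2 := (abs_le.1 (taylor_bound hM.le hF hLip y w)).1
  rw [eIx, eNx] at h1
  rw [eIy, eNy] at h2
  have h3 : 0 ≤ (F x - F y) - (1/2) * (a1 + a2) - (t/2) * (b1 - b2)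
      + M/4 * ‖u‖^2 + M * (t/2)^2 * (b1 - b2) := by linarith [h1, h2]
  have egoal : ⟪gx + gy, y - x⟫ = -(a1 + a2) := by
    have : y - x = -u := by rw [hud]; module
    rw [this, inner_add_left, inner_neg_right, inner_neg_right, ha1, ha2]; ring
  rw [egoal, hnd]
  have h5 : 0 ≤ M * ((F x - F y) - (1/2) * (a1 + a2) - (t/2) * (b1 - b2)
      + M/4 * ‖u‖^2 + M * (t/2)^2 * (b1 - b2)) := mul_nonneg hM.le h3
  have h6 : M * ((F x - F y) - (1/2) * (a1 + a2) - (t/2) * (b1 - b2)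
      + M/4 * ‖u‖^2 + M * (t/2)^2 * (b1 - b2))
      = M * (F x - F y) - M * (1/2) * (a1 + a2) - (M * t) * ((b1 - b2)/2)
      + M * M / 4 * ‖u‖^2 + (M * t) * ((M * t) * ((b1 - b2)/4)) := by ring
  rw [h6, ht] at h5
  linarith [h5]

set_option maxHeartbeats 1000000 in
lemma pair_bound {d : ℕ} {f : EuclideanSpace ℝ (Fin d) → ℝ}
    {g : EuclideanSpace ℝ (Fin d) → EuclideanSpace ℝ (Fin d)}
    {F : EuclideanSpace ℝ (Fin d) → ℝ} {M : ℝ} (hM : 0 ≤ M)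
    (hF : Differentiable ℝ F) (hLip : LipschitzWith M.toNNReal (gradient F))
    {x y : EuclideanSpace ℝ (Fin d)} (hxy : x ≠ y)
    (hfx : F x = f x) (hfy : F y = f y)
    (hgx : gradient F x = g x) (hgy : gradient F y = g y) :
    Real.sqrt (funA f g x y ^ 2 + funB g x y ^ 2) + funA f g x y ≤ M := by
  have hn : (0:ℝ) < ‖x - y‖ := by
    rw [norm_pos_iff]
    exact sub_ne_zero.2 hxy
  have hn2 : (0:ℝ) < ‖x - y‖ ^ 2 := by positivity
  set N : ℝ := 2 * (f x - f y) + ⟪g x + g y, y - x⟫ with hN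
  have hA : funA f g x y = |N| / ‖x - y‖ ^ 2 := by
    unfold funA jet
    congr 2
    have h0 : ⟪g x, x - x⟫ = 0 := by simp
    have h0' : ⟪g y, y - y⟫ = 0 := by simp
    have h1 : ⟪g y, y - x⟫ = -⟪g y, x - y⟫ := by
      rw [show y - x = -(x - y) by abel, inner_neg_right]
    rw [hN, inner_add_left, h1]
    rw [h0, h0']
    ring
  have hB : funB g x y = ‖g x - g y‖ / ‖x - y‖ := rfl
  set A := funA f g x y
  set B := funB g x y
  have hboth : ‖g x - g y‖ ^ 2 + 2 * M * |N| ≤ M ^ 2 * ‖x - y‖ ^ 2 ∧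
      2 * |N| ≤ M * ‖x - y‖ ^ 2 := by
    rcases eq_or_lt_of_le hM with hM0 | hM0
    · -- M = 0 : gradient constant, everything vanishes
      have hg : g x = g y := by
        have := hLip.dist_le_mul x y
        rw [← hM0] at this
        simp only [Real.toNNReal_zero, NNReal.coe_zero, zero_mul] at this
        have : dist (gradient F x) (gradient F y) = 0 := le_antisymm this dist_nonneg
        rw [← hgx, ← hgy]
        exact dist_eq_zero.1 this
      have hN0 : N = 0 := by
        have h1 : F y - F x - ⟪gradient F x, y - x⟫ = 0 := by
          have := taylor_bound hM hF hLip x y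
          rw [← hM0] at this
          simp only [zero_div, zero_mul] at this
          exact abs_eq_zero.1 (le_antisymm this (abs_nonneg _))
        rw [hN, ← hg, ← hgx, ← hfx, ← hfy]
        rw [inner_add_left]
        linarith [h1]
      rw [hN0, hg, ← hM0]
      constructor <;> simp
    · -- M > 0 : use key_ineq in both directions
      have k1 := key_ineq hM0 hF hLip x y
      have k2 := key_ineq hM0 hF hLip y x
      rw [hfx, hfy, hgx, hgy] at k1 k2
      have e1 : ‖g y - g x‖ = ‖g x - g y‖ := norm_sub_rev _ _
      have e2 : ‖y - x‖ = ‖x - y‖ := norm_sub_rev _ _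
      have e3 : ⟪g y + g x, x - y⟫ = -⟪g x + g y, y - x⟫ := by
        rw [show x - y = -(y - x) by abel, inner_neg_right, add_comm (g y) (g x)]
      rw [e1, e2, e3] at k2
      have hfirst : ‖g x - g y‖ ^ 2 + 2 * M * |N| ≤ M ^ 2 * ‖x - y‖ ^ 2 := by
        rcases abs_cases N with ⟨h, _⟩ | ⟨h, _⟩ <;> rw [h, hN] <;>
          [linarith [k2]; linarith [k1]]
      have hsecond : 2 * |N| ≤ M * ‖x - y‖ ^ 2 := by
        have h' : M * (2 * |N|) ≤ M * (M * ‖x - y‖ ^ 2) := by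
          nlinarith [hfirst, sq_nonneg ‖g x - g y‖]
        exact le_of_mul_le_mul_left h' hM0
      exact ⟨hfirst, hsecond⟩
  obtain ⟨habs, habs2⟩ := hboth
  have hdiv : B ^ 2 + 2 * M * A ≤ M ^ 2 := by
    have hcalc : B ^ 2 + 2 * M * A = (‖g x - g y‖ ^ 2 + 2 * M * |N|) / ‖x - y‖ ^ 2 := by
      rw [hA, hB, div_pow]
      field_simp
      try ring
    rw [hcalc, div_le_iff₀ hn2]
    nlinarith [habs]
  have hA0 : 0 ≤ A := by
    rw [hA]; positivity
  have hB0 : 0 ≤ B := by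
    rw [hB]; positivity
  have hAM : A ≤ M / 2 := by
    rw [hA, div_le_div_iff₀ hn2 (by norm_num : (0:ℝ) < 2)]
    linarith [habs2]
  have hsq : A ^ 2 + B ^ 2 ≤ (M - A) ^ 2 := by nlinarith [hdiv]
  have h1 : Real.sqrt (A ^ 2 + B ^ 2) ≤ M - A := by
    calc Real.sqrt (A ^ 2 + B ^ 2) ≤ Real.sqrt ((M - A) ^ 2) := Real.sqrt_le_sqrt hsq
      _ = M - A := Real.sqrt_sq (by linarith)
  linarith

/-- If `F` interpolates the 1-field and `∇F` is `M`-Lipschitz, then `Γ(P_E) ≤ M`;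
in particular each `√(A² + B²) + A ≤ M`. -/
theorem statement1 {d : ℕ} (hd : 1 ≤ d) (E : Set (EuclideanSpace ℝ (Fin d)))
    (hE : E.Finite) (h2 : ∃ x ∈ E, ∃ y ∈ E, x ≠ y)
    (f : EuclideanSpace ℝ (Fin d) → ℝ)
    (g : EuclideanSpace ℝ (Fin d) → EuclideanSpace ℝ (Fin d))
    (F : EuclideanSpace ℝ (Fin d) → ℝ) (M : ℝ) (hM : 0 ≤ M)
    (hF : Differentiable ℝ F)
    (hLip : LipschitzWith M.toNNReal (gradient F))
    (hInterp : ∀ x ∈ E, F x = f x ∧ gradient F x = g x) :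
    Gamma E f g ≤ M ∧ ∀ x ∈ E, ∀ y ∈ E, x ≠ y →
      Real.sqrt (funA f g x y ^ 2 + funB g x y ^ 2) + funA f g x y ≤ M := by
  have hpair : ∀ x ∈ E, ∀ y ∈ E, x ≠ y →
      Real.sqrt (funA f g x y ^ 2 + funB g x y ^ 2) + funA f g x y ≤ M := by
    intro x hx y hy hxy
    exact pair_bound hM hF hLip hxy (hInterp x hx).1 (hInterp y hy).1
      (hInterp x hx).2 (hInterp y hy).2
  refine ⟨?_, hpair⟩
  apply Real.sSup_le _ hM
  rintro t ⟨x, hx, y, hy, hxy, rfl⟩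
  exact hpair x hx y hy hxy
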